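/- arXiv:2209.06079 — 3 statements merged into one kernel-verified Lean document; each statement's English description precedes it below -/
import Mathlib

section
/- For any real numbers M > 0 and α > β > 0, the sum over k ∈ ℕ (k ≥ 1) of ln(1 + (M·k^{-1/β})^α) is bounded by C(α,β)·M^β, where C(α,β) depends only on α and β. -/
open Real Finset

/-- Stirling-type lower bound: N log N ≤ log(N!) + N, written with the sum of logs. -/
private lemma sum_log_lower : ∀ N : ℕ,
    (N : ℝ) * Real.log N ≤ (∑ k ∈ Finset.range N, Real.log ((k : ℝ) + 1)) + N := by
  intro N
  induction N with
  | zero => simp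
  | succ N ih =>
    rw [Finset.sum_range_succ]
    push_cast
    have key : (N : ℝ) * Real.log ((N : ℝ) + 1) ≤ (N : ℝ) * Real.log N + 1 := by
      rcases Nat.eq_zero_or_pos N with h | h
      · simp [h]
      · have hN : (0 : ℝ) < N := by exact_mod_cast h
        have h1 : Real.log (((N : ℝ) + 1) / N) ≤ ((N : ℝ) + 1) / N - 1 :=
          Real.log_le_sub_one_of_pos (by positivity)
        have h2 : Real.log (((N : ℝ) + 1) / N) = Real.log ((N : ℝ) + 1) - Real.log N :=
          Real.log_div (by positivity) (ne_of_gt hN)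
        have h3 : ((N : ℝ) + 1) / N - 1 = 1 / N := by field_simp; ring
        rw [h2, h3] at h1
        have := mul_le_mul_of_nonneg_left h1 hN.le
        rw [mul_sub] at this
        rw [mul_one_div, div_self (ne_of_gt hN)] at this
        linarith
    linarith

/-- telescoping step: (γ-1)(x+1)^(-γ) ≤ x^(-(γ-1)) - (x+1)^(-(γ-1)) for x ≥ 1. -/
private lemma tail_step (γ : ℝ) (hγ : 1 < γ) {x : ℝ} (hx : 1 ≤ x) :
    (γ - 1) * (x + 1) ^ (-γ) ≤ x ^ (-(γ - 1)) - (x + 1) ^ (-(γ - 1)) := by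
  set q := γ - 1 with hq
  have hq0 : 0 < q := by simp [hq]; linarith
  have hx0 : 0 < x := by linarith
  have hn0 : 0 < x + 1 := by linarith
  -- key: 1 + q/(x+1) ≤ ((x+1)/x)^q
  have hlog : Real.log (x / (x + 1)) ≤ -(1 / (x + 1)) := by
    have := Real.log_le_sub_one_of_pos (show 0 < x / (x + 1) by positivity)
    have h2 : x / (x + 1) - 1 = -(1 / (x + 1)) := by field_simp; ring
    linarith [h2 ▸ this]
  have hlog2 : 1 / (x + 1) ≤ Real.log ((x + 1) / x) := by
    have : Real.log ((x + 1) / x) = - Real.log (x / (x + 1)) := by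
      rw [← Real.log_inv]; congr 1; field_simp
    linarith [this]
  have hkey : 1 + q / (x + 1) ≤ ((x + 1) / x) ^ q := by
    have h1 : ((x + 1) / x) ^ q = Real.exp (q * Real.log ((x + 1) / x)) := by
      rw [Real.rpow_def_of_pos (by positivity)]; ring_nf
    have h2 : 1 + q * Real.log ((x + 1) / x) ≤ Real.exp (q * Real.log ((x + 1) / x)) := by
      linarith [Real.add_one_le_exp (q * Real.log ((x + 1) / x))]
    have h3 : q / (x + 1) ≤ q * Real.log ((x + 1) / x) := by
      rw [div_eq_mul_one_div]
      exact mul_le_mul_of_nonneg_left hlog2 hq0.le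
    rw [h1]; linarith
  -- multiply by (x+1)^(-q) > 0
  have hpow : (0 : ℝ) < (x + 1) ^ (-q) := Real.rpow_pos_of_pos hn0 _
  have hmul := mul_le_mul_of_nonneg_left hkey hpow.le
  have e1 : (x + 1) ^ (-q) * (1 + q / (x + 1)) = (x + 1) ^ (-q) + q * (x + 1) ^ (-γ) := by
    have : (x + 1) ^ (-γ) = (x + 1) ^ (-q) * (x + 1)⁻¹ := by
      rw [show -γ = -q + (-1 : ℝ) by rw [hq]; ring, Real.rpow_add hn0, Real.rpow_neg_one]
    rw [this]; field_simp
  have e2 : (x + 1) ^ (-q) * (((x + 1) / x) ^ q) = x ^ (-q) := by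
    rw [Real.div_rpow hn0.le hx0.le, Real.rpow_neg hn0.le]
    rw [Real.rpow_neg hx0.le]
    field_simp
  rw [e1, e2] at hmul
  linarith

/-- partial sums of the tail of the p-series -/
private lemma tail_partial (γ : ℝ) (hγ : 1 < γ) {N : ℝ} (hN : 1 ≤ N) (K : ℕ) :
    ∑ k ∈ Finset.range K, (N + k + 1) ^ (-γ) ≤
      (N ^ (-(γ - 1)) - (N + K) ^ (-(γ - 1))) / (γ - 1) := by
  have hq0 : (0 : ℝ) < γ - 1 := by linarith
  induction K with
  | zero => simp
  | succ K ih =>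
    rw [Finset.sum_range_succ]
    have hx : 1 ≤ N + K := by
      have : (0 : ℝ) ≤ (K : ℕ) := by positivity
      linarith
    have hstep := tail_step γ hγ hx
    have : ((N + K : ℝ) + 1) ^ (-γ) ≤
        ((N + K) ^ (-(γ - 1)) - (N + K + 1) ^ (-(γ - 1))) / (γ - 1) := by
      rw [le_div_iff₀ hq0]; linarith
    push_cast
    have hc : ((N + (K : ℝ) + 1)) = N + ((K : ℝ) + 1) := by ring
    calc (∑ k ∈ Finset.range K, (N + k + 1) ^ (-γ)) + (N + K + 1) ^ (-γ)
        ≤ (N ^ (-(γ - 1)) - (N + K) ^ (-(γ - 1))) / (γ - 1)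
          + ((N + K) ^ (-(γ - 1)) - (N + K + 1) ^ (-(γ - 1))) / (γ - 1) := by
          exact add_le_add ih this
      _ = (N ^ (-(γ - 1)) - (N + ((K : ℝ) + 1)) ^ (-(γ - 1))) / (γ - 1) := by
          rw [← hc]; ring

private lemma tail_partial' (γ : ℝ) (hγ : 1 < γ) {N : ℝ} (hN : 1 ≤ N) (K : ℕ) :
    ∑ k ∈ Finset.range K, (N + k + 1) ^ (-γ) ≤ N ^ (-(γ - 1)) / (γ - 1) := by
  refine (tail_partial γ hγ hN K).trans ?_
  have h1 : (0:ℝ) ≤ (N + K) ^ (-(γ - 1)) := Real.rpow_nonneg (by positivity) _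
  have h2 : (0:ℝ) < γ - 1 := by linarith
  have h3 : N ^ (-(γ - 1)) - (N + K) ^ (-(γ - 1)) ≤ N ^ (-(γ - 1)) := by linarith
  gcongr

set_option maxHeartbeats 1000000 in
/-- for α > β > 0 there is C = C(α,β) with
∑_{k≥1} ln(1 + (M k^{-1/β})^α) ≤ C·M^β for all M > 0. -/
theorem stmt_2 (α β : ℝ) (hβ : 0 < β) (hαβ : β < α) :
    ∃ C : ℝ, 0 < C ∧ ∀ M : ℝ, 0 < M →
      (∑' k : ℕ, Real.log (1 + (M * ((k : ℝ) + 1) ^ (-(1 / β))) ^ α)) ≤ C * M ^ β := by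
  set γ := α / β with hγdef
  have hγ : 1 < γ := (one_lt_div hβ).2 hαβ
  have hγ0 : 0 < γ := by linarith
  have hq0 : 0 < γ - 1 := by linarith
  have hβγ : β * γ = α := by rw [hγdef]; field_simp
  refine ⟨2 * (Real.log 2 + γ) + (1 + (γ - 1)⁻¹) + (γ - 1)⁻¹, ?_, ?_⟩
  · have := Real.log_pos (by norm_num : (1:ℝ) < 2)
    have : 0 < (γ - 1)⁻¹ := by positivity
    positivity
  intro M hM
  have hMβ : (0:ℝ) < M ^ β := Real.rpow_pos_of_pos hM β
  have hMα : (0:ℝ) < M ^ α := Real.rpow_pos_of_pos hM α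
  -- rewrite the summand
  have hrw : ∀ k : ℕ, (M * ((k : ℝ) + 1) ^ (-(1 / β))) ^ α
      = M ^ α * ((k : ℝ) + 1) ^ (-γ) := by
    intro k
    have hn : (0:ℝ) < (k : ℝ) + 1 := by positivity
    rw [Real.mul_rpow hM.le (Real.rpow_nonneg hn.le _), ← Real.rpow_mul hn.le]
    congr 1
    rw [hγdef]; ring
  set a : ℕ → ℝ := fun k => Real.log (1 + (M * ((k : ℝ) + 1) ^ (-(1 / β))) ^ α) with ha
  have hterm : ∀ k : ℕ, a k = Real.log (1 + M ^ α * ((k : ℝ) + 1) ^ (-γ)) := by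
    intro k; rw [ha]; simp only [hrw k]
  have hpos : ∀ k : ℕ, (0:ℝ) < ((k : ℝ) + 1) ^ (-γ) := fun k =>
    Real.rpow_pos_of_pos (by positivity) _
  have h0 : ∀ k, 0 ≤ a k := by
    intro k; rw [hterm k]
    exact Real.log_nonneg (by nlinarith [hpos k])
  have hub : ∀ k, a k ≤ M ^ α * ((k : ℝ) + 1) ^ (-γ) := by
    intro k; rw [hterm k]
    have := Real.log_le_sub_one_of_pos (show (0:ℝ) < 1 + M ^ α * ((k : ℝ) + 1) ^ (-γ) by
      nlinarith [hpos k])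
    linarith
  -- summability
  have hsumf : Summable (fun k : ℕ => ((k : ℝ) + 1) ^ (-γ)) := by
    have h1 : Summable (fun n : ℕ => (n : ℝ) ^ (-γ)) :=
      Real.summable_nat_rpow.2 (by linarith)
    have h2 := (summable_nat_add_iff 1).2 h1
    refine h2.congr fun k => ?_
    push_cast
    norm_num
  have hsumg : Summable (fun k : ℕ => M ^ α * ((k : ℝ) + 1) ^ (-γ)) := hsumf.mul_left _
  have hsuma : Summable a := Summable.of_nonneg_of_le h0 hub hsumg
  -- full zeta-type bound (used for M < 1)
  have hzeta : (∑' k : ℕ, ((k : ℝ) + 1) ^ (-γ)) ≤ 1 + (γ - 1)⁻¹ := by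
    have hsplit := Summable.sum_add_tsum_nat_add 1 hsumf
    rw [← hsplit]
    have hfirst : ∑ k ∈ Finset.range 1, ((k : ℝ) + 1) ^ (-γ) = 1 := by
      simp [Real.one_rpow]
    have htail : (∑' k : ℕ, (((k + 1 : ℕ) : ℝ) + 1) ^ (-γ)) ≤ (γ - 1)⁻¹ := by
      apply Real.tsum_le_of_sum_range_le (fun k => (hpos _).le)
      intro K
      have := tail_partial' γ hγ (le_refl (1:ℝ)) K
      rw [Real.one_rpow, one_div] at this
      refine le_trans (le_of_eq ?_) this
      apply Finset.sum_congr rfl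
      intro k _
      congr 1
      push_cast; ring
    rw [hfirst]
    linarith
  rcases lt_or_ge M 1 with hM1 | hM1
  · -- small M : compare with the full series
    have h1 : (∑' k, a k) ≤ ∑' k : ℕ, M ^ α * ((k : ℝ) + 1) ^ (-γ) :=
      Summable.tsum_le_tsum hub hsuma hsumg
    rw [tsum_mul_left] at h1
    have h2 : M ^ α ≤ M ^ β := Real.rpow_le_rpow_of_exponent_ge hM hM1.le hαβ.le
    have h3 : (∑' k, a k) ≤ (1 + (γ - 1)⁻¹) * M ^ β := by
      calc (∑' k, a k) ≤ M ^ α * (∑' k : ℕ, ((k : ℝ) + 1) ^ (-γ)) := h1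
        _ ≤ M ^ α * (1 + (γ - 1)⁻¹) := by
            apply mul_le_mul_of_nonneg_left hzeta hMα.le
        _ ≤ M ^ β * (1 + (γ - 1)⁻¹) := by
            apply mul_le_mul_of_nonneg_right h2 (by positivity)
        _ = (1 + (γ - 1)⁻¹) * M ^ β := by ring
    have hl2 := Real.log_pos (by norm_num : (1:ℝ) < 2)
    have hinv : (0:ℝ) < (γ - 1)⁻¹ := inv_pos.2 hq0
    nlinarith [hMβ, mul_pos hMβ (show (0:ℝ) < 2 * (Real.log 2 + γ) + (γ-1)⁻¹ by linarith)]
  · -- large M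
    have hMβ1 : (1:ℝ) ≤ M ^ β := Real.one_le_rpow hM1 hβ.le
    set N : ℕ := ⌈M ^ β⌉₊ with hNdef
    have hNge : M ^ β ≤ (N : ℝ) := Nat.le_ceil _
    have hN1 : (1:ℝ) ≤ (N : ℝ) := le_trans hMβ1 hNge
    have hNle : (N : ℝ) ≤ 2 * M ^ β := by
      have := Nat.ceil_lt_add_one hMβ.le
      rw [← hNdef] at this
      linarith
    have hsplit := Summable.sum_add_tsum_nat_add N hsuma
    rw [← hsplit]
    -- head bound
    have hhead : (∑ k ∈ Finset.range N, a k) ≤ (Real.log 2 + γ) * N := by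
      have hptw : ∀ k ∈ Finset.range N, a k ≤
          Real.log 2 + γ * (Real.log N - Real.log ((k : ℝ) + 1)) := by
        intro k hk
        rw [Finset.mem_range] at hk
        have hn1 : (1:ℝ) ≤ (k : ℝ) + 1 := by linarith [show (0:ℝ) ≤ (k:ℝ) from Nat.cast_nonneg k]
        have hnN : (k : ℝ) + 1 ≤ (N : ℝ) := by exact_mod_cast Nat.succ_le_of_lt hk
        have hn0 : (0:ℝ) < (k : ℝ) + 1 := by positivity
        have hN0 : (0:ℝ) < (N : ℝ) := by linarith
        -- M^α * n^{-γ} ≤ (N/n)^γ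
        have e1 : M ^ α = (M ^ β) ^ γ := by
          rw [← Real.rpow_mul hM.le, hβγ]
        have e2 : ((N : ℝ) / ((k : ℝ) + 1)) ^ γ
            = (N : ℝ) ^ γ * ((k : ℝ) + 1) ^ (-γ) := by
          rw [Real.div_rpow hN0.le hn0.le, Real.rpow_neg hn0.le, div_eq_mul_inv]
        have hle1 : M ^ α * ((k : ℝ) + 1) ^ (-γ) ≤ ((N : ℝ) / ((k : ℝ) + 1)) ^ γ := by
          rw [e1, e2]
          exact mul_le_mul_of_nonneg_right
            (Real.rpow_le_rpow hMβ.le hNge hγ0.le) (hpos k).le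
        have hge1 : (1:ℝ) ≤ ((N : ℝ) / ((k : ℝ) + 1)) ^ γ := by
          apply Real.one_le_rpow ?_ hγ0.le
          rw [le_div_iff₀ hn0]; linarith
        have hlog : a k ≤ Real.log (2 * ((N : ℝ) / ((k : ℝ) + 1)) ^ γ) := by
          rw [hterm k]
          apply Real.log_le_log (by nlinarith [hpos k])
          nlinarith
        calc a k ≤ Real.log (2 * ((N : ℝ) / ((k : ℝ) + 1)) ^ γ) := hlog
          _ = Real.log 2 + γ * Real.log ((N : ℝ) / ((k : ℝ) + 1)) := by
              rw [Real.log_mul (by norm_num) (by positivity),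
                Real.log_rpow (by positivity)]
          _ = Real.log 2 + γ * (Real.log N - Real.log ((k : ℝ) + 1)) := by
              rw [Real.log_div (by positivity) (by positivity)]
        done
      calc (∑ k ∈ Finset.range N, a k)
          ≤ ∑ k ∈ Finset.range N, (Real.log 2 + γ * (Real.log N - Real.log ((k : ℝ) + 1))) :=
            Finset.sum_le_sum hptw
        _ = N * Real.log 2 + γ * ((N : ℝ) * Real.log N
              - ∑ k ∈ Finset.range N, Real.log ((k : ℝ) + 1)) := by
            rw [Finset.sum_add_distrib, Finset.sum_const, Finset.card_range,
              ← Finset.mul_sum, Finset.sum_sub_distrib, Finset.sum_const, Finset.card_range]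
            push_cast; ring
        _ ≤ N * Real.log 2 + γ * N := by
            have := sum_log_lower N
            nlinarith
        _ = (Real.log 2 + γ) * N := by ring
    -- tail bound
    have htail : (∑' k : ℕ, a (k + N)) ≤ (γ - 1)⁻¹ * M ^ β := by
      have hsumtail : Summable (fun k : ℕ => a (k + N)) := (summable_nat_add_iff N).2 hsuma
      have hub2 : ∀ k : ℕ, a (k + N) ≤ M ^ α * ((N : ℝ) + k + 1) ^ (-γ) := by
        intro k
        refine (hub (k + N)).trans (le_of_eq ?_)
        congr 2
        push_cast; ring
      have hsumg2 : Summable (fun k : ℕ => M ^ α * ((N : ℝ) + k + 1) ^ (-γ)) := by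
        refine ((summable_nat_add_iff N).2 hsumg).congr fun k => ?_
        congr 2
        push_cast; ring
      have h1 : (∑' k : ℕ, a (k + N)) ≤ ∑' k : ℕ, M ^ α * ((N : ℝ) + k + 1) ^ (-γ) :=
        Summable.tsum_le_tsum hub2 hsumtail hsumg2
      rw [tsum_mul_left] at h1
      have h2 : (∑' k : ℕ, ((N : ℝ) + k + 1) ^ (-γ)) ≤ (N : ℝ) ^ (-(γ - 1)) / (γ - 1) := by
        apply Real.tsum_le_of_sum_range_le
          (fun k => (Real.rpow_pos_of_pos (by positivity) _).le)
        exact tail_partial' γ hγ hN1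
      have h3 : (N : ℝ) ^ (-(γ - 1)) ≤ (M ^ β) ^ (-(γ - 1)) :=
        Real.rpow_le_rpow_of_nonpos hMβ hNge (by linarith)
      have h4 : M ^ α * (M ^ β) ^ (-(γ - 1)) = M ^ β := by
        rw [← Real.rpow_mul hM.le, ← Real.rpow_add hM]
        congr 1
        nlinarith [hβγ]
      calc (∑' k : ℕ, a (k + N))
          ≤ M ^ α * ∑' k : ℕ, ((N : ℝ) + k + 1) ^ (-γ) := h1
        _ ≤ M ^ α * ((N : ℝ) ^ (-(γ - 1)) / (γ - 1)) :=
            mul_le_mul_of_nonneg_left h2 hMα.le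
        _ ≤ M ^ α * ((M ^ β) ^ (-(γ - 1)) / (γ - 1)) := by
            apply mul_le_mul_of_nonneg_left ?_ hMα.le
            gcongr
        _ = (γ - 1)⁻¹ * M ^ β := by
            rw [div_eq_mul_inv, ← mul_assoc, h4]; ring
    have hl2 := Real.log_pos (by norm_num : (1:ℝ) < 2)
    have hNM : (Real.log 2 + γ) * N ≤ 2 * (Real.log 2 + γ) * M ^ β := by
      have : (0:ℝ) < Real.log 2 + γ := by linarith
      nlinarith
    have hinv : (0:ℝ) < (γ - 1)⁻¹ := inv_pos.2 hq0
    nlinarith [mul_pos hMβ (show (0:ℝ) < 1 + (γ-1)⁻¹ by linarith)]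
end

section
/- Let (μ_k)_{k≥1} be a nonincreasing sequence of nonnegative reals satisfying μ_k ≤ Y·exp(-c·ε·k^{1/(d-1)}) for all k, where Y ≥ 0, c > 0, ε ∈ (0,1], and d ≥ 2 an integer. Then ∑_{k=1}^∞ ln(1+μ_k) ≤ C·ε^{1-d}·(ln(2+Y))^d, where C depends only on c and d. -/
open Real MeasureTheory Set

lemma integrableOn_aux {m : ℕ} (hm : 1 ≤ m) {a : ℝ} (ha : 0 < a) :
    IntegrableOn (fun x : ℝ => Real.exp (-a * x ^ ((1:ℝ)/m))) (Ioi 0) := by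
  have hm0 : (0:ℝ) < m := by exact_mod_cast hm
  have hmeas : Measurable (fun x : ℝ => Real.exp (-a * x ^ ((1:ℝ)/m))) := by fun_prop
  have h1 : IntegrableOn (fun x : ℝ => Real.exp (-a * x ^ ((1:ℝ)/m))) (Ioc 0 1) := by
    refine Integrable.mono' (g := fun _ => (1:ℝ)) (integrableOn_const measure_Ioc_lt_top.ne)
      hmeas.aestronglyMeasurable.restrict ?_
    filter_upwards [ae_restrict_mem measurableSet_Ioc] with x hx
    rw [Real.norm_eq_abs, abs_of_pos (Real.exp_pos _)]
    refine Real.exp_le_one_iff.2 ?_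
    have : 0 ≤ x ^ ((1:ℝ)/m) := Real.rpow_nonneg hx.1.le _
    nlinarith
  have h2 : IntegrableOn (fun x : ℝ => Real.exp (-a * x ^ ((1:ℝ)/m))) (Ioi 1) := by
    refine Integrable.mono' ((integrableOn_Ioi_rpow_of_lt (by norm_num : (-2:ℝ) < -1)
      one_pos).const_mul ((Nat.factorial (2*m) : ℝ) / a ^ (2*m)))
      hmeas.aestronglyMeasurable.restrict ?_
    filter_upwards [ae_restrict_mem measurableSet_Ioi] with x hx
    have hx0 : (0:ℝ) < x := lt_trans one_pos hx
    rw [Real.norm_eq_abs, abs_of_pos (Real.exp_pos _)]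
    have ht : 0 < a * x ^ ((1:ℝ)/m) := by positivity
    have key : (a * x ^ ((1:ℝ)/m)) ^ (2*m) / (Nat.factorial (2*m) : ℝ)
        ≤ Real.exp (a * x ^ ((1:ℝ)/m)) := by
      calc (a * x ^ ((1:ℝ)/m)) ^ (2*m) / (Nat.factorial (2*m) : ℝ)
          ≤ ∑ i ∈ Finset.range (2*m+1), (a * x ^ ((1:ℝ)/m)) ^ i / (Nat.factorial i : ℝ) :=
            Finset.single_le_sum (f := fun i => (a * x ^ ((1:ℝ)/m)) ^ i / (Nat.factorial i : ℝ))
              (fun i _ => by positivity) (Finset.self_mem_range_succ (2*m))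
        _ ≤ _ := Real.sum_le_exp_of_nonneg ht.le (2*m+1)
    have hxp : (x ^ ((1:ℝ)/m)) ^ (2*m) = x ^ 2 := by
      rw [← Real.rpow_natCast (x ^ ((1:ℝ)/m)) (2*m), ← Real.rpow_mul hx0.le]
      have h2 : (1:ℝ)/m * ((2*m : ℕ):ℝ) = 2 := by push_cast; field_simp
      rw [h2]
      norm_num
    have hx2 : x ^ (-2:ℝ) = (x ^ 2)⁻¹ := by
      rw [Real.rpow_neg hx0.le]
      norm_num
    have heq : ((2*m).factorial : ℝ) / a ^ (2*m) * x ^ (-2:ℝ)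
        = ((a * x ^ ((1:ℝ)/m)) ^ (2*m) / (Nat.factorial (2*m) : ℝ))⁻¹ := by
      rw [hx2, mul_pow, hxp]
      have h1 : (0:ℝ) < ((2*m).factorial : ℝ) := by positivity
      field_simp
    rw [neg_mul, Real.exp_neg, heq]
    exact inv_anti₀ (by positivity) key
  have : Ioi (0:ℝ) = Ioc 0 1 ∪ Ioi 1 := (Set.Ioc_union_Ioi_eq_Ioi one_pos.le).symm
  rw [this]
  exact h1.union h2

lemma sum_exp_le {m : ℕ} (hm : 1 ≤ m) {a : ℝ} (ha : 0 < a) (N : ℕ) :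
    ∑ k ∈ Finset.range N, Real.exp (-(a * ((k:ℝ)+1) ^ ((1:ℝ)/m))) ≤ (m.factorial : ℝ) / a ^ m := by
  have hm0 : (0:ℝ) < m := by exact_mod_cast hm
  set f := fun x : ℝ => Real.exp (-a * x ^ ((1:ℝ)/m)) with hf
  have hant : AntitoneOn f (Icc 0 (0 + (N:ℝ))) := by
    intro x hx y hy hxy
    simp only [hf]
    apply Real.exp_le_exp.2
    have : x ^ ((1:ℝ)/m) ≤ y ^ ((1:ℝ)/m) := Real.rpow_le_rpow hx.1 hxy (by positivity)
    nlinarith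
  have hs := hant.sum_le_integral
  have hsum : ∑ k ∈ Finset.range N, Real.exp (-(a * ((k:ℝ)+1) ^ ((1:ℝ)/m)))
      = ∑ i ∈ Finset.range N, f (0 + ((i+1:ℕ):ℝ)) := by
    refine Finset.sum_congr rfl fun i _ => ?_
    simp [hf, neg_mul]
  have hio : ∫ x in (0:ℝ)..(0 + (N:ℝ)), f x = ∫ x in Ioc (0:ℝ) (N:ℝ), f x := by
    rw [zero_add, intervalIntegral.integral_of_le (by positivity)]
  have hmono : ∫ x in Ioc (0:ℝ) (N:ℝ), f x ≤ ∫ x in Ioi (0:ℝ), f x := by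
    refine MeasureTheory.setIntegral_mono_set (integrableOn_aux hm ha) ?_ ?_
    · exact Filter.Eventually.of_forall fun x => (Real.exp_pos _).le
    · exact HasSubset.Subset.eventuallyLE Set.Ioc_subset_Ioi_self
  have hval : ∫ x in Ioi (0:ℝ), f x = (m.factorial : ℝ) / a ^ m := by
    rw [hf, integral_exp_neg_mul_rpow (by positivity) ha]
    rw [show (-1:ℝ) / ((1:ℝ)/m) = -(m:ℝ) by field_simp,
        show (1:ℝ) / ((1:ℝ)/m) = (m:ℝ) by field_simp]
    rw [Real.rpow_neg ha.le, Real.rpow_natCast, Real.Gamma_nat_eq_factorial]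
    ring
  calc ∑ k ∈ Finset.range N, Real.exp (-(a * ((k:ℝ)+1) ^ ((1:ℝ)/m)))
      = ∑ i ∈ Finset.range N, f (0 + ((i+1:ℕ):ℝ)) := hsum
    _ ≤ ∫ x in (0:ℝ)..(0 + (N:ℝ)), f x := hs
    _ = ∫ x in Ioc (0:ℝ) (N:ℝ), f x := hio
    _ ≤ ∫ x in Ioi (0:ℝ), f x := hmono
    _ = (m.factorial : ℝ) / a ^ m := hval

/-- if (μ_k) is nonincreasing, nonnegative and
μ_k ≤ Y exp(-cε k^{1/(d-1)}), then ∑ ln(1+μ_k) ≤ C ε^{1-d} (ln(2+Y))^d,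
with C depending only on c and d. -/
theorem stmt_6 (d : ℕ) (hd : 2 ≤ d) (c : ℝ) (hc : 0 < c) :
    ∃ C : ℝ, 0 < C ∧ ∀ ε : ℝ, 0 < ε → ε ≤ 1 → ∀ Y : ℝ, 0 ≤ Y →
      ∀ μ : ℕ → ℝ, Antitone μ → (∀ k, 0 ≤ μ k) →
      (∀ k : ℕ, μ k ≤ Y * Real.exp (-(c * ε * ((k : ℝ) + 1) ^ ((1 : ℝ) / (d - 1))))) →
      (∑' k : ℕ, Real.log (1 + μ k)) ≤ C * ε ^ ((1 : ℝ) - d) * (Real.log (2 + Y)) ^ d := by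
  set m := d - 1 with hmdef
  have hm1 : 1 ≤ m := by omega
  have hdm : d = m + 1 := by omega
  have hlog2 : 0 < Real.log 2 := Real.log_pos one_lt_two
  have hm0 : (0:ℝ) < m := by exact_mod_cast hm1
  refine ⟨(2/c)^m + ((Real.log 2)⁻¹)^m + (m.factorial:ℝ) * (2/c)^m * ((Real.log 2)⁻¹)^d,
    by positivity, ?_⟩
  intro ε hε hε1 Y hY μ hmono hpos hbound
  set L := Real.log (2 + Y) with hL
  have hL2 : Real.log 2 ≤ L := Real.log_le_log (by norm_num) (by linarith)
  have hL0 : 0 < L := lt_of_lt_of_le hlog2 hL2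
  have hcd : ((d:ℝ) - 1) = (m:ℝ) := by rw [hdm]; push_cast; ring
  set K := ⌈(2*L/(c*ε))^m⌉₊ with hK
  set a := c*ε/2 with ha
  have ha0 : 0 < a := by positivity
  -- each term nonneg and ≤ L
  have hterm_nonneg : ∀ k, 0 ≤ Real.log (1 + μ k) :=
    fun k => Real.log_nonneg (by linarith [hpos k])
  have hμY : ∀ k, μ k ≤ Y := by
    intro k
    have h1 : Real.exp (-(c * ε * ((k:ℝ)+1) ^ ((1:ℝ)/((d:ℝ)-1)))) ≤ 1 := by
      rw [Real.exp_le_one_iff]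
      have : (0:ℝ) ≤ ((k:ℝ)+1) ^ ((1:ℝ)/((d:ℝ)-1)) := Real.rpow_nonneg (by positivity) _
      nlinarith
    calc μ k ≤ Y * Real.exp (-(c * ε * ((k:ℝ)+1) ^ ((1:ℝ)/((d:ℝ)-1)))) := hbound k
      _ ≤ Y * 1 := mul_le_mul_of_nonneg_left h1 hY
      _ = Y := mul_one Y
  have hterm_le_L : ∀ k, Real.log (1 + μ k) ≤ L := by
    intro k
    exact Real.log_le_log (by linarith [hpos k]) (by linarith [hμY k])
  -- tail bound
  have htail : ∀ k : ℕ, K ≤ k →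
      Real.log (1 + μ k) ≤ Real.exp (-(a * ((k:ℝ)+1) ^ ((1:ℝ)/m))) := by
    intro k hk
    have hv : (2*L/(c*ε))^m ≤ ((k:ℝ)+1) := by
      calc (2*L/(c*ε))^m ≤ (K:ℝ) := Nat.le_ceil _
        _ ≤ (k:ℝ) := by exact_mod_cast hk
        _ ≤ (k:ℝ)+1 := by linarith
    have hrt : 2*L/(c*ε) ≤ ((k:ℝ)+1) ^ ((1:ℝ)/m) := by
      have h := Real.rpow_le_rpow (by positivity) hv (by positivity : (0:ℝ) ≤ (1:ℝ)/m)
      rwa [← Real.rpow_natCast (2*L/(c*ε)) m, ← Real.rpow_mul (by positivity),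
        show (m:ℝ) * ((1:ℝ)/m) = 1 by field_simp, Real.rpow_one] at h
    set s := ((k:ℝ)+1) ^ ((1:ℝ)/m) with hs
    have hs0 : 0 ≤ s := Real.rpow_nonneg (by positivity) _
    have h2L : 2*L ≤ c*ε*s := by
      rw [div_le_iff₀ (by positivity)] at hrt
      linarith [hrt]
    have hYexp : Y ≤ Real.exp L := by
      rw [hL, Real.exp_log (by linarith)]; linarith
    have hμk : μ k ≤ Real.exp (-(a*s)) := by
      have hb := hbound k
      rw [hcd] at hb
      calc μ k ≤ Y * Real.exp (-(c*ε*s)) := hb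
        _ ≤ Real.exp L * Real.exp (-(c*ε*s)) :=
            mul_le_mul_of_nonneg_right hYexp (Real.exp_pos _).le
        _ = Real.exp (L - c*ε*s) := by rw [← Real.exp_add]; ring_nf
        _ ≤ Real.exp (-(a*s)) := by
            apply Real.exp_le_exp.2
            rw [ha]; linarith
    calc Real.log (1 + μ k) ≤ Real.log (Real.exp (μ k)) := by
          apply Real.log_le_log (by linarith [hpos k])
          linarith [Real.add_one_le_exp (μ k)]
      _ = μ k := Real.log_exp _
      _ ≤ Real.exp (-(a*s)) := hμk
  -- partial sums
  have hpartial : ∀ N, ∑ k ∈ Finset.range N, Real.log (1 + μ k)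
      ≤ (K:ℝ)*L + (m.factorial:ℝ)/a^m := by
    intro N
    rw [← Finset.sum_filter_add_sum_filter_not (Finset.range N) (· < K)]
    have hhead : ∑ k ∈ (Finset.range N).filter (· < K), Real.log (1 + μ k) ≤ (K:ℝ)*L := by
      calc ∑ k ∈ (Finset.range N).filter (· < K), Real.log (1 + μ k)
          ≤ ((Finset.range N).filter (· < K)).card • L :=
            Finset.sum_le_card_nsmul _ _ L (fun k _ => hterm_le_L k)
        _ = (((Finset.range N).filter (· < K)).card : ℝ) * L := by
            rw [nsmul_eq_mul]
        _ ≤ (K:ℝ)*L := by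
            apply mul_le_mul_of_nonneg_right _ hL0.le
            have hsub : (Finset.range N).filter (· < K) ⊆ Finset.range K := by
              intro x hx
              simp only [Finset.mem_filter, Finset.mem_range] at hx ⊢
              exact hx.2
            have := Finset.card_le_card hsub
            rw [Finset.card_range] at this
            exact_mod_cast this
    have htl : ∑ k ∈ (Finset.range N).filter (fun k => ¬ (k < K)), Real.log (1 + μ k)
        ≤ (m.factorial:ℝ)/a^m := by
      calc ∑ k ∈ (Finset.range N).filter (fun k => ¬ (k < K)), Real.log (1 + μ k)
          ≤ ∑ k ∈ (Finset.range N).filter (fun k => ¬ (k < K)),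
              Real.exp (-(a * ((k:ℝ)+1) ^ ((1:ℝ)/m))) := by
            refine Finset.sum_le_sum fun k hk => ?_
            simp only [Finset.mem_filter, not_lt] at hk
            exact htail k hk.2
        _ ≤ ∑ k ∈ Finset.range N, Real.exp (-(a * ((k:ℝ)+1) ^ ((1:ℝ)/m))) :=
            Finset.sum_le_sum_of_subset_of_nonneg (Finset.filter_subset _ _)
              (fun k _ _ => (Real.exp_pos _).le)
        _ ≤ (m.factorial:ℝ)/a^m := sum_exp_le hm1 ha0 N
    linarith
  have htsum := Real.tsum_le_of_sum_range_le hterm_nonneg hpartial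
  -- arithmetic
  have hE : ε ^ ((1:ℝ) - (d:ℝ)) = (ε^m)⁻¹ := by
    rw [show (1:ℝ) - (d:ℝ) = -(m:ℝ) by rw [hdm]; push_cast; ring,
      Real.rpow_neg hε.le, Real.rpow_natCast]
  rw [hE]
  have hKb : (K:ℝ) ≤ (2*L/(c*ε))^m + 1 := (Nat.ceil_lt_add_one (by positivity)).le
  have h1 : (2*L/(c*ε))^m * L = (2/c)^m * (ε^m)⁻¹ * L^d := by
    rw [hdm, pow_succ]
    field_simp
    have hεm : ε^m * ε⁻¹^m = 1 := by rw [← mul_pow, mul_inv_cancel₀ hε.ne', one_pow]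
    linear_combination (L^m * c⁻¹^m * 2^m) * hεm
  have h2 : L ≤ ((Real.log 2)⁻¹)^m * (ε^m)⁻¹ * L^d := by
    have hLm : (Real.log 2)^m * L ≤ L^d := by
      rw [hdm, pow_succ]
      exact mul_le_mul_of_nonneg_right (pow_le_pow_left₀ hlog2.le hL2 m) hL0.le
    have hεm : (1:ℝ) ≤ (ε^m)⁻¹ := by
      rw [le_inv_comm₀ one_pos (by positivity)]
      simpa using pow_le_one₀ hε.le hε1
    calc L = ((Real.log 2)⁻¹)^m * ((Real.log 2)^m * L) := by
          rw [← mul_assoc, ← mul_pow, inv_mul_cancel₀ hlog2.ne', one_pow, one_mul]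
      _ ≤ ((Real.log 2)⁻¹)^m * (1 * L^d) := by
          rw [one_mul]
          exact mul_le_mul_of_nonneg_left hLm (by positivity)
      _ ≤ ((Real.log 2)⁻¹)^m * ((ε^m)⁻¹ * L^d) := by
          apply mul_le_mul_of_nonneg_left _ (by positivity)
          exact mul_le_mul_of_nonneg_right hεm (by positivity)
      _ = ((Real.log 2)⁻¹)^m * (ε^m)⁻¹ * L^d := by ring
  have h3 : (m.factorial:ℝ)/a^m
      ≤ (m.factorial:ℝ) * (2/c)^m * ((Real.log 2)⁻¹)^d * ((ε^m)⁻¹ * L^d) := by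
    have haeq : (m.factorial:ℝ)/a^m = (m.factorial:ℝ) * (2/c)^m * (ε^m)⁻¹ := by
      rw [ha]
      field_simp
      have hX : c^m * c⁻¹^m = 1 := by rw [← mul_pow, mul_inv_cancel₀ hc.ne', one_pow]
      have hY : (1/2:ℝ)^m * 2^m = 1 := by rw [← mul_pow]; norm_num
      linear_combination (-(ε^m * ((1/2:ℝ)^m * 2^m))) * hX + (-(ε^m)) * hY
    rw [haeq]
    have hfac : (1:ℝ) ≤ ((Real.log 2)⁻¹)^d * L^d := by
      rw [← mul_pow]
      apply one_le_pow₀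
      rw [le_inv_mul_iff₀ hlog2, mul_one]
      exact hL2
    calc (m.factorial:ℝ) * (2/c)^m * (ε^m)⁻¹
        = (m.factorial:ℝ) * (2/c)^m * (ε^m)⁻¹ * 1 := by ring
      _ ≤ (m.factorial:ℝ) * (2/c)^m * (ε^m)⁻¹ * (((Real.log 2)⁻¹)^d * L^d) :=
          mul_le_mul_of_nonneg_left hfac (by positivity)
      _ = (m.factorial:ℝ) * (2/c)^m * ((Real.log 2)⁻¹)^d * ((ε^m)⁻¹ * L^d) := by ring
  have hKL : (K:ℝ)*L ≤ (2*L/(c*ε))^m * L + L := by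
    have := mul_le_mul_of_nonneg_right hKb hL0.le
    linarith
  calc (∑' k : ℕ, Real.log (1 + μ k)) ≤ (K:ℝ)*L + (m.factorial:ℝ)/a^m := htsum
    _ ≤ ((2*L/(c*ε))^m * L + L) + (m.factorial:ℝ)/a^m := by linarith
    _ ≤ ((2/c)^m * (ε^m)⁻¹ * L^d + ((Real.log 2)⁻¹)^m * (ε^m)⁻¹ * L^d)
        + (m.factorial:ℝ) * (2/c)^m * ((Real.log 2)⁻¹)^d * ((ε^m)⁻¹ * L^d) := by
        rw [h1]
        linarith [h2, h3]
    _ = ((2/c)^m + ((Real.log 2)⁻¹)^m + (m.factorial:ℝ) * (2/c)^m * ((Real.log 2)⁻¹)^d)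
        * (ε^m)⁻¹ * L^d := by ring
end

section
/- Let α be a multi-index in ℕ_0^d and r ∈ {1,...,|α|}. Then r!·∑_{p(α,r)} ∏_{j=1}^{|α|} 1/k_j! = C(|α|-1, r-1), where the sum is over all tuples (k_1,...,k_{|α|}; λ_1,...,λ_{|α|}) with k_i ∈ ℕ_0, λ_i ∈ ℕ_0^d nonzero and distinct in the appropriate ordering, satisfying ∑ k_i = r and ∑ k_i λ_i = α — and consequently ∑_{r=1}^{|α|} r!·∑_{p(α,r)} ∏_j 1/k_j! = 2^{|α|-1}. -/
/-- The Faà di Bruno index set p(α,r), encoded as the set of multisets of nonzero parts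
(the distinct parts λ_j with multiplicities k_j) of size r summing to |α| = n. -/
def faaDiBrunoSet (n r : ℕ) : Set (Multiset ℕ) :=
  {m : Multiset ℕ | m.card = r ∧ m.sum = n ∧ 0 ∉ m}

/-- The sum ∑_{p(α,r)} r!·∏_j 1/k_j!, where the k_j are the multiplicities. -/
noncomputable def faaDiBrunoSum (n r : ℕ) : ℝ :=
  ∑' m : faaDiBrunoSet n r,
    (r.factorial : ℝ) *
      ∏ a ∈ (m : Multiset ℕ).toFinset, (1 / (((m : Multiset ℕ).count a).factorial : ℝ))

/- Auxiliary development -/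

/-- The weight of a multiset. -/
noncomputable def fdbW (m : Multiset ℕ) : ℝ :=
  (m.card.factorial : ℝ) * ∏ a ∈ m.toFinset, (1 / ((m.count a).factorial : ℝ))

/-- A Finset version of `faaDiBrunoSet`. -/
noncomputable def fdbFinset (n r : ℕ) : Finset (Multiset ℕ) :=
  ((Finset.univ : Finset (Nat.Partition n)).image Nat.Partition.parts).filter
    (fun m => Multiset.card m = r)

lemma mem_fdbFinset {n r : ℕ} {m : Multiset ℕ} :
    m ∈ fdbFinset n r ↔ Multiset.card m = r ∧ m.sum = n ∧ 0 ∉ m := by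
  simp only [fdbFinset, Finset.mem_filter, Finset.mem_image, Finset.mem_univ, true_and]
  constructor
  · rintro ⟨⟨p, rfl⟩, h⟩
    exact ⟨h, p.parts_sum, fun h0 => absurd (p.parts_pos h0) (lt_irrefl 0)⟩
  · rintro ⟨h1, h2, h3⟩
    exact ⟨⟨⟨m, fun {i} hi => Nat.pos_of_ne_zero (fun e => h3 (e ▸ hi)), h2⟩, rfl⟩, h1⟩

lemma fdb_coe (n r : ℕ) : faaDiBrunoSet n r = ↑(fdbFinset n r) := by
  ext m; simp [faaDiBrunoSet, mem_fdbFinset]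

lemma card_le_sum' {m : Multiset ℕ} (h : 0 ∉ m) : Multiset.card m ≤ m.sum := by
  induction m using Multiset.induction with
  | empty => simp
  | cons a t ih =>
    simp only [Multiset.card_cons, Multiset.sum_cons]
    have h1 : 0 ∉ t := fun ht => h (Multiset.mem_cons_of_mem ht)
    have h2 : a ≠ 0 := fun e => h (e ▸ Multiset.mem_cons_self a t)
    have := ih h1
    omega

lemma fdb_empty {n r : ℕ} (h : n < r) : fdbFinset n r = ∅ := by
  ext m
  simp only [mem_fdbFinset, Finset.notMem_empty, iff_false]
  rintro ⟨h1, h2, h3⟩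
  exact absurd (card_le_sum' h3) (by omega)

lemma prod_inv_fact_subset {m : Multiset ℕ} {s : Finset ℕ} (h : m.toFinset ⊆ s) :
    ∏ a ∈ s, (1 / ((m.count a).factorial : ℝ)) =
      ∏ a ∈ m.toFinset, (1 / ((m.count a).factorial : ℝ)) := by
  refine (Finset.prod_subset h fun x _ hx => ?_).symm
  rw [Multiset.count_eq_zero.2 (fun hxm => hx (Multiset.mem_toFinset.2 hxm))]
  simp

lemma fdbW_erase {m : Multiset ℕ} {a : ℕ} (ha : a ∈ m) :
    fdbW (m.erase a) =
      ((m.count a : ℝ)) * ((Multiset.card m - 1).factorial : ℝ) *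
        ∏ b ∈ m.toFinset, (1 / ((m.count b).factorial : ℝ)) := by
  have hsub : (m.erase a).toFinset ⊆ m.toFinset :=
    Multiset.toFinset_subset.2 fun x hx => Multiset.mem_of_mem_erase hx
  have hcard : Multiset.card (m.erase a) = Multiset.card m - 1 := by
    rw [Multiset.card_erase_of_mem ha]; rfl
  have haT : a ∈ m.toFinset := Multiset.mem_toFinset.2 ha
  have hca : 1 ≤ m.count a := Multiset.one_le_count_iff_mem.2 ha
  rw [fdbW, hcard, ← prod_inv_fact_subset hsub]
  rw [← Finset.mul_prod_erase _ _ haT, ← Finset.mul_prod_erase _ (fun b => (1 : ℝ) / ((m.count b).factorial : ℝ)) haT]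
  have hprod : ∏ b ∈ m.toFinset.erase a, (1 / (((m.erase a).count b).factorial : ℝ)) =
      ∏ b ∈ m.toFinset.erase a, (1 / ((m.count b).factorial : ℝ)) := by
    refine Finset.prod_congr rfl fun b hb => ?_
    rw [Multiset.count_erase_of_ne (Finset.ne_of_mem_erase hb)]
  rw [hprod, Multiset.count_erase_self]
  have hfact : ((m.count a).factorial : ℝ) = (m.count a : ℝ) * ((m.count a - 1).factorial : ℝ) := by
    rw [← Nat.cast_mul, ← Nat.succ_pred_eq_of_pos hca]
    rw [Nat.factorial_succ]
    simp [Nat.succ_pred_eq_of_pos hca]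
  have hne : ((m.count a - 1).factorial : ℝ) ≠ 0 := Nat.cast_ne_zero.2 (Nat.factorial_ne_zero _)
  have hne2 : ((m.count a).factorial : ℝ) ≠ 0 := Nat.cast_ne_zero.2 (Nat.factorial_ne_zero _)
  field_simp [hfact]
  rw [hfact]; ring

lemma fdbW_rec {m : Multiset ℕ} (hm : m ≠ 0) :
    fdbW m = ∑ a ∈ m.toFinset, fdbW (m.erase a) := by
  have hcard : 1 ≤ Multiset.card m := Multiset.card_pos.2 hm
  symm
  calc ∑ a ∈ m.toFinset, fdbW (m.erase a)
      = ∑ a ∈ m.toFinset, ((m.count a : ℝ)) * (((Multiset.card m - 1).factorial : ℝ) *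
          ∏ b ∈ m.toFinset, (1 / ((m.count b).factorial : ℝ))) := by
        refine Finset.sum_congr rfl fun a ha => ?_
        rw [fdbW_erase (Multiset.mem_toFinset.1 ha), mul_assoc]
    _ = ((∑ a ∈ m.toFinset, m.count a : ℕ) : ℝ) * (((Multiset.card m - 1).factorial : ℝ) *
          ∏ b ∈ m.toFinset, (1 / ((m.count b).factorial : ℝ))) := by
        rw [← Finset.sum_mul]; push_cast; ring
    _ = fdbW m := by
        rw [Multiset.toFinset_sum_count_eq, fdbW, ← mul_assoc, ← Nat.cast_mul,
          Nat.mul_factorial_pred (Nat.one_le_iff_ne_zero.1 hcard)]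

lemma fdb_r_one {n : ℕ} (hn : 1 ≤ n) : fdbFinset n 1 = {({n} : Multiset ℕ)} := by
  ext m
  simp only [mem_fdbFinset, Finset.mem_singleton]
  constructor
  · rintro ⟨h1, h2, _⟩
    obtain ⟨a, rfl⟩ := Multiset.card_eq_one.1 h1
    simp only [Multiset.sum_singleton] at h2
    rw [h2]
  · rintro rfl
    refine ⟨rfl, by simp, ?_⟩
    simp only [Multiset.mem_singleton]
    omega

lemma fdbW_singleton (a : ℕ) : fdbW ({a} : Multiset ℕ) = 1 := by
  simp [fdbW, Nat.factorial]

/-- The hockey stick step. -/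
lemma hockey {n s : ℕ} (hs : 1 ≤ s) (hn : s + 1 ≤ n) :
    ∑ a ∈ Finset.Icc 1 (n - s), (n - a - 1).choose (s - 1) = (n - 1).choose s := by
  have key : ∑ j ∈ Finset.Icc (s - 1) (n - 2), j.choose (s - 1) = (n - 1).choose s := by
    have := Nat.sum_Icc_choose (n - 2) (s - 1)
    rw [show (n - 2) + 1 = n - 1 by omega, show (s - 1) + 1 = s by omega] at this
    exact this
  rw [← key]
  refine Finset.sum_nbij' (fun a => n - a - 1) (fun j => n - j - 1) ?_ ?_ ?_ ?_ ?_
  · intro a ha; simp only [Finset.mem_Icc] at *; omega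
  · intro j hj; simp only [Finset.mem_Icc] at *; omega
  · intro a ha; simp only [Finset.mem_Icc] at ha; omega
  · intro j hj; simp only [Finset.mem_Icc] at hj; omega
  · intro a _; rfl

lemma key_sum : ∀ r n : ℕ, 1 ≤ r → r ≤ n →
    ∑ m ∈ fdbFinset n r, fdbW m = ((n - 1).choose (r - 1) : ℝ) := by
  intro r
  induction r with
  | zero => intro n h; omega
  | succ s ih =>
    intro n _ hn
    rcases Nat.eq_zero_or_pos s with rfl | hs
    · -- base case r = 1
      rw [fdb_r_one (by omega), Finset.sum_singleton, fdbW_singleton]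
      simp
    · -- inductive step, r = s + 1, s ≥ 1
      have hrec : ∑ m ∈ fdbFinset n (s + 1), fdbW m =
          ∑ m ∈ fdbFinset n (s + 1), ∑ a ∈ m.toFinset, fdbW (m.erase a) := by
        refine Finset.sum_congr rfl fun m hm => ?_
        have := (mem_fdbFinset.1 hm).1
        exact fdbW_rec (by rintro rfl; simp at this)
      rw [hrec]
      have hbij : ∑ m ∈ fdbFinset n (s + 1), ∑ a ∈ m.toFinset, fdbW (m.erase a) =
          ∑ a ∈ Finset.Icc 1 n, ∑ m' ∈ fdbFinset (n - a) s, fdbW m' := by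
        rw [Finset.sum_sigma', Finset.sum_sigma']
        refine Finset.sum_nbij' (fun x => ⟨x.2, x.1.erase x.2⟩) (fun y => ⟨y.2.cons y.1, y.1⟩)
          ?_ ?_ ?_ ?_ ?_
        · rintro ⟨m, a⟩ hx
          simp only [Finset.mem_sigma, mem_fdbFinset, Finset.mem_Icc] at *
          obtain ⟨⟨h1, h2, h3⟩, ha⟩ := hx
          have ham : a ∈ m := Multiset.mem_toFinset.1 ha
          have hcons : a ::ₘ m.erase a = m := Multiset.cons_erase ham
          have hsum : a + (m.erase a).sum = n := by
            have := congrArg Multiset.sum hcons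
            rw [Multiset.sum_cons] at this
            omega
          have ha1 : 1 ≤ a := Nat.pos_of_ne_zero (fun e => h3 (e ▸ ham))
          refine ⟨⟨ha1, by omega⟩, ?_, by omega, fun h0 => h3 (Multiset.mem_of_mem_erase h0)⟩
          rw [Multiset.card_erase_of_mem ham, h1]; rfl
        · rintro ⟨a, m'⟩ hy
          simp only [Finset.mem_sigma, mem_fdbFinset, Finset.mem_Icc] at *
          obtain ⟨⟨ha1, ha2⟩, h1, h2, h3⟩ := hy
          refine ⟨⟨by simp [h1], by simp [Multiset.sum_cons, h2]; omega, ?_⟩, by simp⟩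
          simp only [Multiset.mem_cons, not_or]
          exact ⟨by omega, h3⟩
        · rintro ⟨m, a⟩ hx
          simp only [Finset.mem_sigma, mem_fdbFinset] at hx
          have ham : a ∈ m := Multiset.mem_toFinset.1 hx.2
          simp only [Multiset.cons_eq_cons]
          exact Sigma.ext (Multiset.cons_erase ham) (HEq.refl a)
        · rintro ⟨a, m'⟩ _
          exact Sigma.ext rfl (heq_of_eq (Multiset.erase_cons_head a m'))
        · rintro ⟨m, a⟩ _; rfl
      rw [hbij]
      have hsplit : Finset.Icc 1 n = Finset.Icc 1 (n - s) ∪ Finset.Icc (n - s + 1) n := by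
        ext x
        simp only [Finset.mem_union, Finset.mem_Icc]
        omega
      have hdisj : Disjoint (Finset.Icc 1 (n - s)) (Finset.Icc (n - s + 1) n) := by
        simp only [Finset.disjoint_left, Finset.mem_Icc]
        intros; omega
      rw [hsplit, Finset.sum_union hdisj]
      have hzero : ∑ a ∈ Finset.Icc (n - s + 1) n, ∑ m' ∈ fdbFinset (n - a) s, fdbW m' = 0 := by
        refine Finset.sum_eq_zero fun a ha => ?_
        simp only [Finset.mem_Icc] at ha
        rw [fdb_empty (by omega), Finset.sum_empty]
      rw [hzero, add_zero]
      have hih : ∑ a ∈ Finset.Icc 1 (n - s), ∑ m' ∈ fdbFinset (n - a) s, fdbW m' =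
          ∑ a ∈ Finset.Icc 1 (n - s), (((n - a) - 1).choose (s - 1) : ℝ) := by
        refine Finset.sum_congr rfl fun a ha => ?_
        simp only [Finset.mem_Icc] at ha
        exact ih (n - a) hs (by omega)
      rw [hih, ← Nat.cast_sum, hockey hs hn]
      norm_num

lemma faaDiBrunoSum_eq (n r : ℕ) :
    faaDiBrunoSum n r = ∑ m ∈ fdbFinset n r, fdbW m := by
  rw [faaDiBrunoSum, fdb_coe]
  rw [Finset.tsum_subtype' (fdbFinset n r)
    (fun m => (r.factorial : ℝ) * ∏ a ∈ m.toFinset, (1 / ((m.count a).factorial : ℝ)))]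
  refine Finset.sum_congr rfl fun m hm => ?_
  rw [fdbW, (mem_fdbFinset.1 hm).1]

/-- r!·∑_{p(α,r)} ∏_j 1/k_j! = C(|α|-1, r-1), and consequently
∑_{r=1}^{|α|} r!·∑_{p(α,r)} ∏_j 1/k_j! = 2^{|α|-1}. -/
theorem stmt_15 (n : ℕ) (hn : 1 ≤ n) :
    (∀ r : ℕ, 1 ≤ r → r ≤ n → faaDiBrunoSum n r = (Nat.choose (n - 1) (r - 1) : ℝ)) ∧
    (∑ r ∈ Finset.Icc 1 n, faaDiBrunoSum n r) = (2 : ℝ) ^ (n - 1) := by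
  have h1 : ∀ r : ℕ, 1 ≤ r → r ≤ n → faaDiBrunoSum n r = (Nat.choose (n - 1) (r - 1) : ℝ) := by
    intro r hr1 hr2
    rw [faaDiBrunoSum_eq, key_sum r n hr1 hr2]
  refine ⟨h1, ?_⟩
  have h2 : ∑ r ∈ Finset.Icc 1 n, faaDiBrunoSum n r =
      ∑ r ∈ Finset.Icc 1 n, ((n - 1).choose (r - 1) : ℝ) := by
    refine Finset.sum_congr rfl fun r hr => ?_
    simp only [Finset.mem_Icc] at hr
    exact h1 r hr.1 hr.2
  rw [h2, ← Nat.cast_sum]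
  have h3 : ∑ r ∈ Finset.Icc 1 n, (n - 1).choose (r - 1) =
      ∑ i ∈ Finset.range ((n - 1) + 1), (n - 1).choose i := by
    refine Finset.sum_nbij' (fun r => r - 1) (fun i => i + 1) ?_ ?_ ?_ ?_ ?_
    · intro r hr; simp only [Finset.mem_Icc, Finset.mem_range] at *; omega
    · intro i hi; simp only [Finset.mem_Icc, Finset.mem_range] at *; omega
    · intro r hr; simp only [Finset.mem_Icc] at hr; omega
    · intro i _; omega
    · intro r _; rfl
  rw [h3, Nat.sum_range_choose]
  push_cast
  ring
end
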